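/- Let D be an n-cell lattice diagram and let T and R be two injective tableaux of shape D. Then ∂Y_T applied to the monomial Z_R equals γ_D · X_R if R is obtained from T by a permutation of entries fixing every column, and equals 0 otherwise. Here Y_T = Π_{(r,c)∈D} y_{T(r,c)}^c, X_R = Π_{(r,c)∈D} x_{R(r,c)}^r, Z_R = X_R Y_R, ∂Y_T is the differential operator obtained from Y_T by replacing each y_k with ∂/∂y_k, and γ_D = Π_{(r,c)∈D} c!. -/

import Mathlib

/-- The monomial `Z_T = Π_j x_{T(r_j,c_j)}^{r_j} y_{T(r_j,c_j)}^{c_j}` associated to an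
injective tableau, viewed as a bijection `T` sending the cell of lex-index `j` to the
entry `T j` (entries taken in `Fin n`). -/
noncomputable def Zmon (n : ℕ) (r c : Fin n → ℕ) (T : Equiv.Perm (Fin n)) :
    MvPolynomial (Fin n ⊕ Fin n) ℚ :=
  ∏ j : Fin n, MvPolynomial.X (Sum.inl (T j)) ^ r j * MvPolynomial.X (Sum.inr (T j)) ^ c j

/-- The monomial `X_R = Π_j x_{R(r_j,c_j)}^{r_j}`. -/
noncomputable def XmonT (n : ℕ) (r : Fin n → ℕ) (R : Equiv.Perm (Fin n)) :
    MvPolynomial (Fin n ⊕ Fin n) ℚ :=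
  ∏ j : Fin n, MvPolynomial.X (Sum.inl (R j)) ^ r j

/-- The operator `∂Y_T`, obtained from `Y_T = Π_j y_{T j}^{c j}` by replacing each
variable `y_k` by `∂/∂y_k`. -/
noncomputable def dYcol (n : ℕ) (c : Fin n → ℕ) (T : Equiv.Perm (Fin n))
    (P : MvPolynomial (Fin n ⊕ Fin n) ℚ) : MvPolynomial (Fin n ⊕ Fin n) ℚ :=
  (List.finRange n).foldl
    (fun Q j => (fun R => MvPolynomial.pderiv (Sum.inr (T j)) R)^[c j] Q) P

lemma iter_pderiv {σ : Type*} (v : σ) (k : ℕ) (e : σ →₀ ℕ) (a : ℚ) :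
    (fun P : MvPolynomial σ ℚ => MvPolynomial.pderiv v P)^[k] (MvPolynomial.monomial e a)
      = MvPolynomial.monomial (e - Finsupp.single v k)
          (((e v).descFactorial k : ℚ) * a) := by
  induction k generalizing e a with
  | zero => simp
  | succ k ih =>
    rw [Function.iterate_succ_apply]
    simp only [MvPolynomial.pderiv_monomial]
    rw [ih]
    have h1 : ((e - Finsupp.single v 1 : _ →₀ ℕ)) v = e v - 1 := by
      rw [Finsupp.tsub_apply, Finsupp.single_eq_same]
    congr 1
    · rw [tsub_tsub, ← Finsupp.single_add, add_comm]
    · rw [h1]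
      have h2 : (e v) * (e v - 1).descFactorial k = (e v).descFactorial (k + 1) := by
        cases h : e v with
        | zero => simp
        | succ m => rw [Nat.succ_sub_one, Nat.succ_descFactorial_succ]
      push_cast [← h2]
      ring

lemma foldl_pderiv {n : ℕ} (c : Fin n → ℕ) (T : Equiv.Perm (Fin n))
    (L : List (Fin n)) (hL : L.Nodup) (e : (Fin n ⊕ Fin n) →₀ ℕ) (a : ℚ) :
    L.foldl (fun Q j => (fun P => MvPolynomial.pderiv (Sum.inr (T j)) P)^[c j] Q)
        (MvPolynomial.monomial e a)
      = MvPolynomial.monomial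
          (e - (L.map fun j => Finsupp.single (Sum.inr (T j) : Fin n ⊕ Fin n) (c j)).sum)
          ((L.map fun j => ((e (Sum.inr (T j))).descFactorial (c j) : ℚ)).prod * a) := by
  induction L generalizing e a with
  | nil => simp
  | cons j L ih =>
    obtain ⟨hj, hL'⟩ := List.nodup_cons.mp hL
    rw [List.foldl_cons, iter_pderiv, ih hL']
    have hcong : ∀ j' ∈ L,
        ((e - Finsupp.single (Sum.inr (T j)) (c j) : _ →₀ ℕ)) (Sum.inr (T j'))
          = e (Sum.inr (T j')) := by
      intro j' hj'
      have hne : (Sum.inr (T j) : Fin n ⊕ Fin n) ≠ Sum.inr (T j') := by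
        simp only [ne_eq, Sum.inr.injEq]
        exact fun h => hj (by rwa [← T.injective h] at hj')
      rw [Finsupp.tsub_apply, Finsupp.single_eq_of_ne' hne, Nat.sub_zero]
    congr 1
    · rw [List.map_cons, List.sum_cons, tsub_tsub]
    · rw [List.map_cons, List.prod_cons,
        List.map_congr_left (fun j' hj' => by rw [hcong j' hj'] :
          ∀ j' ∈ L, ((((e - Finsupp.single (Sum.inr (T j)) (c j) : _ →₀ ℕ))
            (Sum.inr (T j'))).descFactorial (c j') : ℚ)
            = ((e (Sum.inr (T j'))).descFactorial (c j') : ℚ))]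
      ring

lemma Zmon_eq (n : ℕ) (r c : Fin n → ℕ) (R : Equiv.Perm (Fin n)) :
    Zmon n r c R = MvPolynomial.monomial
      (∑ j : Fin n, (Finsupp.single (Sum.inl (R j) : Fin n ⊕ Fin n) (r j)
        + Finsupp.single (Sum.inr (R j)) (c j))) 1 := by
  rw [Zmon, MvPolynomial.monomial_sum_one]
  refine Finset.prod_congr rfl fun j _ => ?_
  rw [MvPolynomial.X_pow_eq_monomial, MvPolynomial.X_pow_eq_monomial,
    MvPolynomial.monomial_mul, mul_one]

lemma XmonT_eq (n : ℕ) (r : Fin n → ℕ) (R : Equiv.Perm (Fin n)) :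
    XmonT n r R = MvPolynomial.monomial
      (∑ j : Fin n, Finsupp.single (Sum.inl (R j) : Fin n ⊕ Fin n) (r j)) 1 := by
  rw [XmonT, MvPolynomial.monomial_sum_one]
  exact Finset.prod_congr rfl fun j _ => MvPolynomial.X_pow_eq_monomial

lemma E_inr {n : ℕ} (r c : Fin n → ℕ) (R : Equiv.Perm (Fin n)) (m : Fin n) :
    ((∑ j : Fin n, (Finsupp.single (Sum.inl (R j) : Fin n ⊕ Fin n) (r j)
        + Finsupp.single (Sum.inr (R j)) (c j)) : _ →₀ ℕ)) (Sum.inr m) = c (R.symm m) := by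
  rw [Finsupp.finset_sum_apply]
  have : ∀ j : Fin n,
      ((Finsupp.single (Sum.inl (R j) : Fin n ⊕ Fin n) (r j)
        + Finsupp.single (Sum.inr (R j)) (c j)) : _ →₀ ℕ) (Sum.inr m)
      = if j = R.symm m then c j else 0 := by
    intro j
    rw [Finsupp.add_apply, Finsupp.single_apply, Finsupp.single_apply]
    simp only [reduceCtorEq, if_false, Sum.inr.injEq, zero_add]
    by_cases h : R j = m
    · rw [if_pos h, if_pos (by rw [← h, Equiv.symm_apply_apply])]
    · rw [if_neg h, if_neg (fun h2 => h (by rw [h2, Equiv.apply_symm_apply]))]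
  rw [Finset.sum_congr rfl fun j _ => this j, Finset.sum_ite_eq' Finset.univ (R.symm m)]
  simp

/-- `∂Y_T Z_R = γ_D · X_R` if `R` is obtained from `T` by a column-fixing
permutation of the entries (equivalently, every entry lies in the same column in `T`
and in `R`), and `∂Y_T Z_R = 0` otherwise. Here `γ_D = Π_{(r,c) ∈ D} c!`. -/
theorem stmt7 (n : ℕ) (r c : Fin n → ℕ)
    (hinj : Function.Injective fun j => (r j, c j))
    (T R : Equiv.Perm (Fin n)) :
    ((∀ m : Fin n, c (T.symm m) = c (R.symm m)) →
        dYcol n c T (Zmon n r c R) = (∏ j : Fin n, (c j).factorial) • XmonT n r R) ∧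
      ((¬ ∀ m : Fin n, c (T.symm m) = c (R.symm m)) →
        dYcol n c T (Zmon n r c R) = 0) := by
  classical
  have hd : dYcol n c T (Zmon n r c R)
      = MvPolynomial.monomial
          ((∑ j : Fin n, (Finsupp.single (Sum.inl (R j) : Fin n ⊕ Fin n) (r j)
              + Finsupp.single (Sum.inr (R j)) (c j)))
            - ∑ j : Fin n, Finsupp.single (Sum.inr (T j) : Fin n ⊕ Fin n) (c j))
          (∏ j : Fin n, ((c (R.symm (T j))).descFactorial (c j) : ℚ)) := by
    rw [Zmon_eq, dYcol, foldl_pderiv c T _ (List.nodup_finRange n)]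
    rw [mul_one,
      Fin.sum_univ_def (fun j : Fin n => Finsupp.single (Sum.inr (T j) : Fin n ⊕ Fin n) (c j)),
      Fin.prod_univ_def (fun j : Fin n => ((c (R.symm (T j))).descFactorial (c j) : ℚ))]
    exact congrArg (MvPolynomial.monomial _)
      (congrArg List.prod (List.map_congr_left fun j _ => by rw [E_inr]))
  constructor
  · intro h
    have hsum : ∑ j : Fin n, Finsupp.single (Sum.inr (T j) : Fin n ⊕ Fin n) (c j)
        = ∑ j : Fin n, Finsupp.single (Sum.inr (R j) : Fin n ⊕ Fin n) (c j) := by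
      have h1 := Equiv.sum_comp T
        (fun m => Finsupp.single (Sum.inr m : Fin n ⊕ Fin n) (c (T.symm m)))
      have h2 := Equiv.sum_comp R
        (fun m => Finsupp.single (Sum.inr m : Fin n ⊕ Fin n) (c (R.symm m)))
      simp only [Equiv.symm_apply_apply] at h1 h2
      rw [h1, h2]
      exact Finset.sum_congr rfl fun m _ => by rw [h m]
    have hco : ∀ j : Fin n, c (R.symm (T j)) = c j := fun j => by
      rw [← h (T j), Equiv.symm_apply_apply]
    rw [hd, hsum, Finset.sum_add_distrib, add_tsub_cancel_right, XmonT_eq]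
    rw [show ((∏ j : Fin n, (c j).factorial) •
        (MvPolynomial.monomial (∑ j : Fin n,
          Finsupp.single (Sum.inl (R j) : Fin n ⊕ Fin n) (r j)) (1 : ℚ)))
      = MvPolynomial.monomial (∑ j : Fin n,
          Finsupp.single (Sum.inl (R j) : Fin n ⊕ Fin n) (r j))
          (((∏ j : Fin n, (c j).factorial : ℕ) : ℚ)) by
        rw [← map_nsmul (MvPolynomial.monomial _)]
        norm_num]
    congr 1
    rw [Nat.cast_prod]
    exact Finset.prod_congr rfl fun j _ => by rw [hco j, Nat.descFactorial_self]
  · intro h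
    push_neg at h
    obtain ⟨m0, hm0⟩ := h
    have hex : ∃ m : Fin n, c (R.symm m) < c (T.symm m) := by
      by_contra hc
      push_neg at hc
      have hsum : ∑ m : Fin n, c (T.symm m) = ∑ m : Fin n, c (R.symm m) := by
        rw [Equiv.sum_comp T.symm c, Equiv.sum_comp R.symm c]
      have hlt := Finset.sum_lt_sum (fun m (_ : m ∈ Finset.univ) => hc m)
        ⟨m0, Finset.mem_univ m0, lt_of_le_of_ne (hc m0) hm0⟩
      omega
    obtain ⟨m, hm⟩ := hex
    rw [hd]
    have hz : (∏ j : Fin n, ((c (R.symm (T j))).descFactorial (c j) : ℚ)) = 0 := by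
      apply Finset.prod_eq_zero (Finset.mem_univ (T.symm m))
      rw [Equiv.apply_symm_apply]
      norm_cast
      exact Nat.descFactorial_eq_zero_iff_lt.mpr hm
    rw [hz, MvPolynomial.monomial_zero]
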